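/- Let μ_A, μ_B, μ_C be the measures on ℝ with respective densities (with respect to Lebesgue measure): for A, (12/5) on (0,1/6) ∪ (1/2,2/3) and (3/10) on the rest of [0,1]; for B, (12/5) on (1/6,1/3) ∪ (2/3,5/6) and (3/10) on the rest of [0,1]; for C, (12/5) on (1/3,1/2) ∪ (5/6,1) and (3/10) on the rest of [0,1]. Let S_A = (0,1/6) ∪ (1/2,2/3), S_B = (1/6,1/3) ∪ (2/3,5/6), S_C = (1/3,1/2) ∪ (5/6,1). Then S_A, S_B, S_C are pairwise disjoint, their union equals [0,1] up to a Lebesgue-null set, and μ_A(S_A) = μ_B(S_B) = μ_C(S_C) = 4/5 > 9/20. Hence the allocation (S_A, S_B, S_C) is strictly better for every player than the contiguous Equitability Procedure allocation, which gives each player exactly 9/20. -/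

import Mathlib

open MeasureTheory Set

/-- The pieces of cake favored by players A, B, C respectively. -/
def SA : Set ℝ := Ioo 0 (1/6) ∪ Ioo (1/2) (2/3)
def SB : Set ℝ := Ioo (1/6) (1/3) ∪ Ioo (2/3) (5/6)
def SC : Set ℝ := Ioo (1/3) (1/2) ∪ Ioo (5/6) 1

/-- Player A's value measure: density 2.4 on `S_A`, 0.3 on the rest of `[0,1]`. -/
noncomputable def muA : Measure ℝ :=
  volume.withDensity (fun x =>
    (12/5 : ENNReal) * SA.indicator 1 x + (3/10 : ENNReal) * (Icc (0:ℝ) 1 \ SA).indicator 1 x)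

/-- Player B's value measure: density 2.4 on `S_B`, 0.3 on the rest of `[0,1]`. -/
noncomputable def muB : Measure ℝ :=
  volume.withDensity (fun x =>
    (12/5 : ENNReal) * SB.indicator 1 x + (3/10 : ENNReal) * (Icc (0:ℝ) 1 \ SB).indicator 1 x)

/-- Player C's value measure: density 2.4 on `S_C`, 0.3 on the rest of `[0,1]`. -/
noncomputable def muC : Measure ℝ :=
  volume.withDensity (fun x =>
    (12/5 : ENNReal) * SC.indicator 1 x + (3/10 : ENNReal) * (Icc (0:ℝ) 1 \ SC).indicator 1 x)

lemma calc_mu (S : Set ℝ) (hS : MeasurableSet S) (hvol : volume S = ENNReal.ofReal (1/3)) :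
    volume.withDensity (fun x =>
      (12/5 : ENNReal) * S.indicator 1 x + (3/10 : ENNReal) * (Icc (0:ℝ) 1 \ S).indicator 1 x) S
    = 4/5 := by
  rw [withDensity_apply _ hS]
  have h : ∀ x ∈ S, (12/5 : ENNReal) * S.indicator 1 x
      + (3/10 : ENNReal) * (Icc (0:ℝ) 1 \ S).indicator 1 x = 12/5 := by
    intro x hx
    rw [indicator_of_mem hx, indicator_of_notMem (fun h => h.2 hx)]
    simp
  rw [setLIntegral_congr_fun hS h, setLIntegral_const, hvol]
  rw [show (12/5 : ENNReal) = ENNReal.ofReal (12/5) by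
    rw [ENNReal.ofReal_div_of_pos (by norm_num)]; norm_num]
  rw [← ENNReal.ofReal_mul (by norm_num)]
  rw [show (4/5 : ENNReal) = ENNReal.ofReal (4/5) by
    rw [ENNReal.ofReal_div_of_pos (by norm_num)]; norm_num]
  norm_num

lemma vol_SA : volume SA = ENNReal.ofReal (1/3) := by
  have hd : Disjoint (Ioo (0:ℝ) (1/6)) (Ioo (1/2) (2/3)) := by
    apply Set.disjoint_left.mpr; rintro x ⟨_, h1⟩ ⟨h2, _⟩; linarith
  rw [SA, measure_union hd measurableSet_Ioo, Real.volume_Ioo, Real.volume_Ioo,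
    ← ENNReal.ofReal_add (by norm_num) (by norm_num)]
  norm_num

lemma vol_SB : volume SB = ENNReal.ofReal (1/3) := by
  have hd : Disjoint (Ioo (1/6:ℝ) (1/3)) (Ioo (2/3) (5/6)) := by
    apply Set.disjoint_left.mpr; rintro x ⟨_, h1⟩ ⟨h2, _⟩; linarith
  rw [SB, measure_union hd measurableSet_Ioo, Real.volume_Ioo, Real.volume_Ioo,
    ← ENNReal.ofReal_add (by norm_num) (by norm_num)]
  norm_num

lemma vol_SC : volume SC = ENNReal.ofReal (1/3) := by
  have hd : Disjoint (Ioo (1/3:ℝ) (1/2)) (Ioo (5/6) 1) := by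
    apply Set.disjoint_left.mpr; rintro x ⟨_, h1⟩ ⟨h2, _⟩; linarith
  rw [SC, measure_union hd measurableSet_Ioo, Real.volume_Ioo, Real.volume_Ioo,
    ← ENNReal.ofReal_add (by norm_num) (by norm_num)]
  norm_num

lemma measSA : MeasurableSet SA := measurableSet_Ioo.union measurableSet_Ioo
lemma measSB : MeasurableSet SB := measurableSet_Ioo.union measurableSet_Ioo
lemma measSC : MeasurableSet SC := measurableSet_Ioo.union measurableSet_Ioo

/-- `S_A`, `S_B`, `S_C` are pairwise disjoint, their union is `[0,1]` up to a
Lebesgue-null set, and each player values his own piece at `4/5 > 9/20`: the allocation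
`(S_A, S_B, S_C)` strictly Pareto dominates the Equitability Procedure allocation. -/
theorem ep_not_pareto_optimal :
    Disjoint SA SB ∧ Disjoint SA SC ∧ Disjoint SB SC ∧
    SA ∪ SB ∪ SC ⊆ Icc (0:ℝ) 1 ∧
    volume (Icc (0:ℝ) 1 \ (SA ∪ SB ∪ SC)) = 0 ∧
    muA SA = 4/5 ∧ muB SB = 4/5 ∧ muC SC = 4/5 ∧
    (9/20 : ENNReal) < 4/5 := by
  refine ⟨?_, ?_, ?_, ?_, ?_, ?_, ?_, ?_, ?_⟩
  · apply Set.disjoint_left.mpr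
    intro x hx hy
    simp only [SA, SB, mem_union, mem_Ioo] at hx hy
    rcases hx with ⟨h1, h2⟩ | ⟨h1, h2⟩ <;> rcases hy with ⟨h3, h4⟩ | ⟨h3, h4⟩ <;> linarith
  · apply Set.disjoint_left.mpr
    intro x hx hy
    simp only [SA, SC, mem_union, mem_Ioo] at hx hy
    rcases hx with ⟨h1, h2⟩ | ⟨h1, h2⟩ <;> rcases hy with ⟨h3, h4⟩ | ⟨h3, h4⟩ <;> linarith
  · apply Set.disjoint_left.mpr
    intro x hx hy
    simp only [SB, SC, mem_union, mem_Ioo] at hx hy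
    rcases hx with ⟨h1, h2⟩ | ⟨h1, h2⟩ <;> rcases hy with ⟨h3, h4⟩ | ⟨h3, h4⟩ <;> linarith
  · intro x hx
    simp only [SA, SB, SC, mem_union, mem_Ioo] at hx
    rcases hx with ((⟨h1, h2⟩ | ⟨h1, h2⟩) | (⟨h1, h2⟩ | ⟨h1, h2⟩)) | (⟨h1, h2⟩ | ⟨h1, h2⟩) <;>
      constructor <;> linarith
  · apply measure_mono_null
      (show Icc (0:ℝ) 1 \ (SA ∪ SB ∪ SC) ⊆
        ({0, 1/6, 1/3, 1/2, 2/3, 5/6, 1} : Set ℝ) from ?_)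
    · exact Set.Finite.measure_zero (Set.toFinite _) volume
    · rintro x ⟨⟨h0, h1⟩, hn⟩
      simp only [SA, SB, SC, mem_union, mem_Ioo, not_or, not_and, not_lt] at hn
      obtain ⟨⟨⟨hA1, hA2⟩, ⟨hB1, hB2⟩⟩, ⟨hC1, hC2⟩⟩ := hn
      simp only [mem_insert_iff, mem_singleton_iff]
      by_contra hc
      push_neg at hc
      obtain ⟨n0, n16, n13, n12, n23, n56, n1⟩ := hc
      have g0 : 0 < x := lt_of_le_of_ne h0 (Ne.symm n0)
      have g1 := hA1 g0
      have g2 := hB1 (lt_of_le_of_ne g1 (Ne.symm n16))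
      have g3 := hC1 (lt_of_le_of_ne g2 (Ne.symm n13))
      have g4 := hA2 (lt_of_le_of_ne g3 (Ne.symm n12))
      have g5 := hB2 (lt_of_le_of_ne g4 (Ne.symm n23))
      have g6 := hC2 (lt_of_le_of_ne g5 (Ne.symm n56))
      exact n1 (le_antisymm h1 g6)
  · exact calc_mu SA measSA vol_SA
  · exact calc_mu SB measSB vol_SB
  · exact calc_mu SC measSC vol_SC
  · rw [show (9/20 : ENNReal) = ENNReal.ofReal (9/20) by
      rw [ENNReal.ofReal_div_of_pos (by norm_num)]; norm_num,
      show (4/5 : ENNReal) = ENNReal.ofReal (4/5) by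
      rw [ENNReal.ofReal_div_of_pos (by norm_num)]; norm_num]
    exact ENNReal.ofReal_lt_ofReal_iff (by norm_num) |>.mpr (by norm_num)
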